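/- Koopman–von Neumann lift (single mode): let p ∈ ℂ[X] be a polynomial and let z : ℝ → ℂ be differentiable with z'(t) = p(z(t)) for all t. Then for every n ∈ ℕ and every t ∈ ℝ, the function t ↦ c(z(t))_n is differentiable at t with derivative equal to ((a† ∘ p(a)) c(z(t)))_n; that is, the coherent sequence evolves componentwise under the linear generator A = a† p(a). -/
import Mathlib


/-- The coherent sequence `c(z)ₙ = zⁿ/√(n!)`. -/
noncomputable def coherent (z : ℂ) : ℕ → ℂ :=
  fun n => z ^ n / (Real.sqrt (Nat.factorial n) : ℂ)

/-- The annihilation operator `(a x)ₙ = √(n+1)·x_{n+1}`. -/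
noncomputable def ann : Module.End ℂ (ℕ → ℂ) :=
  { toFun := fun x n => (Real.sqrt (n + 1) : ℂ) * x (n + 1)
    map_add' := by intro x y; funext n; simp [mul_add]
    map_smul' := by intro c x; funext n; simp [smul_eq_mul]; ring }

/-- The creation operator `(a† x)₀ = 0`, `(a† x)ₙ = √n·x_{n−1}` for `n ≥ 1`. -/
noncomputable def cre : Module.End ℂ (ℕ → ℂ) :=
  { toFun := fun x n => match n with
      | 0 => 0
      | Nat.succ m => (Real.sqrt (m + 1) : ℂ) * x m
    map_add' := by intro x y; funext n; cases n <;> simp [mul_add]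
    map_smul' := by intro c x; funext n; cases n <;> (simp [smul_eq_mul]; try ring) }

lemma coherent_ne_zero (z : ℂ) : coherent z ≠ 0 := by
  intro h
  have := congrFun h 0
  simp [coherent] at this

lemma ann_coherent (z : ℂ) : ann (coherent z) = z • coherent z := by
  funext n
  have h0 : (Real.sqrt (Nat.factorial n) : ℂ) ≠ 0 := by
    exact_mod_cast Real.sqrt_ne_zero'.2 (by positivity)
  have h1 : (Real.sqrt (n + 1) : ℂ) ≠ 0 := by
    exact_mod_cast Real.sqrt_ne_zero'.2 (by positivity)
  have hfac : (Real.sqrt (Nat.factorial (n + 1)) : ℂ)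
      = (Real.sqrt (n + 1) : ℂ) * (Real.sqrt (Nat.factorial n) : ℂ) := by
    push_cast [Nat.factorial_succ, ← Real.sqrt_mul (by positivity : (0:ℝ) ≤ (n:ℝ)+1)]
    norm_num
  simp only [ann, coherent, LinearMap.coe_mk, AddHom.coe_mk, Pi.smul_apply, smul_eq_mul, hfac]
  field_simp
  ring

lemma hasEigen (z : ℂ) : ann.HasEigenvector z (coherent z) :=
  ⟨Module.End.mem_eigenspace_iff.2 (ann_coherent z), coherent_ne_zero z⟩

/-- Koopman–von Neumann lift, single mode: if `z' (t) = p(z(t))`, then the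
coherent sequence evolves componentwise under the linear generator
`A = a† p(a)`. -/
theorem kvn_lift_single_mode (p : Polynomial ℂ) (z : ℝ → ℂ)
    (hz : ∀ t : ℝ, HasDerivAt z (Polynomial.eval (z t) p) t) :
    ∀ (n : ℕ) (t : ℝ),
      HasDerivAt (fun s : ℝ => coherent (z s) n)
        (((cre * Polynomial.aeval ann p) (coherent (z t))) n) t := by
  intro n t
  have hev : (Polynomial.aeval ann p) (coherent (z t))
      = Polynomial.eval (z t) p • coherent (z t) :=
    Module.End.aeval_apply_of_hasEigenvector (hasEigen (z t))
  have hd : HasDerivAt (fun s : ℝ => coherent (z s) n)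
      ((n : ℂ) * z t ^ (n - 1) * Polynomial.eval (z t) p
        / (Real.sqrt (Nat.factorial n) : ℂ)) t := by
    have hp : HasDerivAt (fun s : ℝ => z s ^ n)
        (Polynomial.eval (z t) p • ((n : ℂ) * z t ^ (n - 1))) t :=
      HasDerivAt.scomp (𝕜 := ℝ) t (hasDerivAt_pow n (z t)) (hz t)
    have h := hp.div_const ((Real.sqrt (Nat.factorial n) : ℂ))
    simp only [smul_eq_mul] at h
    have heq : Polynomial.eval (z t) p * ((n : ℂ) * z t ^ (n - 1))
        / (Real.sqrt (Nat.factorial n) : ℂ)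
        = (n : ℂ) * z t ^ (n - 1) * Polynomial.eval (z t) p
          / (Real.sqrt (Nat.factorial n) : ℂ) := by ring
    rw [heq] at h
    simpa [coherent] using h
  convert hd using 1
  simp only [Module.End.mul_apply, hev, map_smul]
  cases n with
  | zero => simp [cre]
  | succ m =>
    have h0 : (Real.sqrt (Nat.factorial m) : ℂ) ≠ 0 := by
      exact_mod_cast Real.sqrt_ne_zero'.2 (by positivity)
    have h1 : (Real.sqrt ((m : ℝ) + 1) : ℂ) ≠ 0 := by
      exact_mod_cast Real.sqrt_ne_zero'.2 (by positivity)
    have hfac : (Real.sqrt (Nat.factorial (m + 1)) : ℂ)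
        = (Real.sqrt (m + 1) : ℂ) * (Real.sqrt (Nat.factorial m) : ℂ) := by
      push_cast [Nat.factorial_succ, ← Real.sqrt_mul (by positivity : (0:ℝ) ≤ (m:ℝ)+1)]
      norm_num
    have hsq : (Real.sqrt (m + 1) : ℂ) * (Real.sqrt (m + 1) : ℂ) = (m : ℂ) + 1 := by
      rw [← Complex.ofReal_mul, Real.mul_self_sqrt (by positivity)]
      push_cast; ring
    simp only [cre, coherent, LinearMap.coe_mk, AddHom.coe_mk, Pi.smul_apply, smul_eq_mul,
      Nat.add_sub_cancel, hfac]
    push_cast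
    field_simp
    rw [← hsq]
    ring
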